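/- Let e_1, …, e_k be independent {0,1}-valued random variables with P(e_i = 1) = p_i and log-likelihood ratios γ_i = ln((1−p_i)/p_i). Then ln(P(⊕_i e_i = 0)/P(⊕_i e_i = 1)) = ln((1 + ∏_i tanh(γ_i/2))/(1 − ∏_i tanh(γ_i/2))). -/

import Mathlib

private noncomputable def parityChi (x : ZMod 2) : ℝ := if x = 1 then -1 else 1

private lemma parityChi_add (a b : ZMod 2) : parityChi (a + b) = parityChi a * parityChi b := by
  rcases (show ∀ x : ZMod 2, x = 0 ∨ x = 1 by decide) a with rfl | rfl <;>
    rcases (show ∀ x : ZMod 2, x = 0 ∨ x = 1 by decide) b with rfl | rfl <;>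
    simp [parityChi, show (1 : ZMod 2) + 1 = 0 from rfl]

private lemma parityChi_sum {ι : Type*} (s : Finset ι) (g : ι → ZMod 2) :
    parityChi (∑ i ∈ s, g i) = ∏ i ∈ s, parityChi (g i) := by
  classical
  induction s using Finset.induction with
  | empty => simp [parityChi]
  | insert _ _ h ih => rw [Finset.sum_insert h, Finset.prod_insert h, parityChi_add, ih]

private lemma sum_prod_pi (k : ℕ) (f : Fin k → ZMod 2 → ℝ) :
    (∑ v : Fin k → ZMod 2, ∏ i, f i (v i)) = ∏ i, (f i 0 + f i 1) := by
  have : ∀ i : Fin k, f i 0 + f i 1 = ∑ x : ZMod 2, f i x := by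
    intro i
    rw [show (Finset.univ : Finset (ZMod 2)) = {0, 1} from rfl]
    simp
  simp_rw [this]
  rw [Finset.prod_univ_sum, ← Fintype.piFinset_univ]

private lemma tanh_half_log (r : ℝ) (hr : 0 < r) :
    Real.tanh (Real.log r / 2) = (r - 1) / (r + 1) := by
  have h := Real.exp_log hr
  rw [Real.tanh_eq_sinh_div_cosh, Real.sinh_eq, Real.cosh_eq]
  have he : Real.exp (Real.log r / 2) ^ 2 = r := by
    rw [← Real.exp_nat_mul]; push_cast; rw [mul_div_cancel₀ _ (two_ne_zero), h]
  set s := Real.exp (Real.log r / 2) with hs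
  have hspos : 0 < s := Real.exp_pos _
  rw [show Real.exp (-(Real.log r / 2)) = s⁻¹ by rw [Real.exp_neg]]
  field_simp
  nlinarith [he]

theorem parity_llr_eq_log_ratio_tanh (k : ℕ) (p : Fin k → ℝ)
    (hp : ∀ i, p i ∈ Set.Ioo (0 : ℝ) 1) :
    Real.log
        ((∑ v ∈ Finset.univ.filter (fun v : Fin k → ZMod 2 => ∑ i, v i = 0),
            ∏ i, (if v i = 1 then p i else 1 - p i)) /
          (∑ v ∈ Finset.univ.filter (fun v : Fin k → ZMod 2 => ∑ i, v i = 1),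
            ∏ i, (if v i = 1 then p i else 1 - p i)))
      = Real.log
          ((1 + ∏ i, Real.tanh (Real.log ((1 - p i) / p i) / 2)) /
            (1 - ∏ i, Real.tanh (Real.log ((1 - p i) / p i) / 2))) := by
  classical
  set f : Fin k → ZMod 2 → ℝ := fun i x => if x = 1 then p i else 1 - p i with hf
  set S0 := ∑ v ∈ Finset.univ.filter (fun v : Fin k → ZMod 2 => ∑ i, v i = 0),
      ∏ i, f i (v i) with hS0
  set S1 := ∑ v ∈ Finset.univ.filter (fun v : Fin k → ZMod 2 => ∑ i, v i = 1),
      ∏ i, f i (v i) with hS1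
  set t := ∏ i, Real.tanh (Real.log ((1 - p i) / p i) / 2) with ht
  -- t = ∏ (1 - 2 p i)
  have htval : t = ∏ i, (1 - 2 * p i) := by
    apply Finset.prod_congr rfl
    intro i _
    obtain ⟨h0, h1⟩ := hp i
    rw [tanh_half_log _ (div_pos (by linarith) h0)]
    field_simp
    ring
  -- filter for ∑ = 1 is the complement of ∑ = 0
  have hfilter : (Finset.univ.filter (fun v : Fin k → ZMod 2 => ∑ i, v i = 1)) =
      (Finset.univ.filter (fun v : Fin k → ZMod 2 => ¬ (∑ i, v i = 0))) := by
    apply Finset.filter_congr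
    intro v _
    have h : ∀ x : ZMod 2, (x = 1) ↔ ¬ (x = 0) := by decide
    exact h _
  -- S0 + S1 = 1
  have hsum : S0 + S1 = 1 := by
    rw [hS0, hS1, hfilter, Finset.sum_filter_add_sum_filter_not]
    rw [sum_prod_pi]
    have : ∀ i : Fin k, f i 0 + f i 1 = 1 := by
      intro i; simp [hf]
    simp_rw [this, Finset.prod_const_one]
  -- S0 - S1 = t
  have hdiff : S0 - S1 = t := by
    rw [htval]
    have key : (∑ v : Fin k → ZMod 2, parityChi (∑ i, v i) * ∏ i, f i (v i))
        = ∏ i, (1 - 2 * p i) := by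
      have : ∀ v : Fin k → ZMod 2,
          parityChi (∑ i, v i) * ∏ i, f i (v i) = ∏ i, (parityChi (v i) * f i (v i)) := by
        intro v
        rw [parityChi_sum, Finset.prod_mul_distrib]
      simp_rw [this]
      rw [sum_prod_pi k (fun i x => parityChi x * f i x)]
      apply Finset.prod_congr rfl
      intro i _
      simp [parityChi, hf]
      ring
    rw [← key, ← Finset.sum_filter_add_sum_filter_not Finset.univ
      (fun v : Fin k → ZMod 2 => ∑ i, v i = 0)]
    have e0 : ∑ v ∈ Finset.univ.filter (fun v : Fin k → ZMod 2 => ∑ i, v i = 0),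
        parityChi (∑ i, v i) * ∏ i, f i (v i) = S0 := by
      rw [hS0]
      apply Finset.sum_congr rfl
      intro v hv
      rw [Finset.mem_filter] at hv
      rw [hv.2]
      simp [parityChi]
    have e1 : ∑ v ∈ Finset.univ.filter (fun v : Fin k → ZMod 2 => ¬ (∑ i, v i = 0)),
        parityChi (∑ i, v i) * ∏ i, f i (v i) = -S1 := by
      rw [hS1, hfilter, ← Finset.sum_neg_distrib]
      apply Finset.sum_congr rfl
      intro v hv
      rw [Finset.mem_filter] at hv
      have h1 : (∑ i, v i) = 1 := by
        rcases (show ∀ x : ZMod 2, x = 0 ∨ x = 1 by decide) (∑ i, v i) with h | h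
        · exact absurd h hv.2
        · exact h
      rw [h1]
      simp [parityChi]
    rw [e0, e1]
    ring
  -- conclude
  have h0 : S0 = (1 + t) / 2 := by linarith
  have h1 : S1 = (1 - t) / 2 := by linarith
  rw [h0, h1, div_div_div_comm, div_self (two_ne_zero), div_one]
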